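/- arXiv:1711.07433 — 6 statements merged into one kernel-verified Lean document; each statement's English description precedes it below -/
import Mathlib

section
/- Let C = {C_1,…,C_k} be a clustering of a finite set X ⊆ ℝ^m with centers μ_i = (1/|C_i|)·Σ_{x∈C_i} x and radii r(C_i) = max_{x∈C_i} d(x, μ_i), satisfying the γ-margin property with γ ≥ 1, and let ν ≥ 1. If x* ∈ C_i satisfies d(x*, μ_i) < (γ−ν+1)·r(C_i), then for every j ≠ i and every y ∈ C_j one has d(x*, y) > (ν−1)·min{d(x*, μ_i), d(y, μ_j)}. In particular, the cross-cluster confusion condition (a) of a (ν,ρ) local distance-weak oracle never holds for the pair (x*, y). -/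
open Finset
open scoped Classical

/-- The center (mean) of a finite cluster of points in Euclidean space. -/
noncomputable def ctr {m : ℕ} (C : Finset (EuclideanSpace ℝ (Fin m))) : EuclideanSpace ℝ (Fin m) :=
  (C.card : ℝ)⁻¹ • ∑ x ∈ C, x

/-- The radius of a cluster: the maximal distance of a member to the center. -/
noncomputable def rad {m : ℕ} (C : Finset (EuclideanSpace ℝ (Fin m))) : ℝ :=
  sSup ((fun x => dist x (ctr C)) '' (C : Set (EuclideanSpace ℝ (Fin m))))

/-- Confusion predicate for the (ν, ρ) local distance-weak oracle. -/
def LocalConfused {m k : ℕ} (Cl : Fin k → Finset (EuclideanSpace ℝ (Fin m))) (ν ρ : ℝ)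
    (x y : EuclideanSpace ℝ (Fin m)) : Prop :=
  (∃ i j, i ≠ j ∧ x ∈ Cl i ∧ y ∈ Cl j ∧
    dist x y < (ν - 1) * min (dist x (ctr (Cl i))) (dist y (ctr (Cl j)))) ∨
  (∃ i, x ∈ Cl i ∧ y ∈ Cl i ∧ 2 * ρ * rad (Cl i) < dist x y)

/-- Confusion predicate for the ρ global distance-weak oracle. -/
def GlobalConfused {m k : ℕ} (Cl : Fin k → Finset (EuclideanSpace ℝ (Fin m))) (ρ : ℝ)
    (x y : EuclideanSpace ℝ (Fin m)) : Prop :=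
  (∃ i j, i ≠ j ∧ x ∈ Cl i ∧ y ∈ Cl j ∧
    (ρ * rad (Cl i) < dist x (ctr (Cl i)) ∨ ρ * rad (Cl j) < dist y (ctr (Cl j)))) ∨
  (∃ i, x ∈ Cl i ∧ y ∈ Cl i ∧ 2 * ρ * rad (Cl i) < dist x y)

/-- Two points lie in the same cluster. -/
def SameCluster {m k : ℕ} (Cl : Fin k → Finset (EuclideanSpace ℝ (Fin m)))
    (x y : EuclideanSpace ℝ (Fin m)) : Prop :=
  ∃ i, x ∈ Cl i ∧ y ∈ Cl i

/-- The truthful (ν, ρ) local distance-weak oracle: answers 0 on confused pairs,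
1 on same-cluster non-confused pairs, and -1 on different-cluster non-confused pairs. -/
noncomputable def localQ {m k : ℕ} (Cl : Fin k → Finset (EuclideanSpace ℝ (Fin m))) (ν ρ : ℝ)
    (x y : EuclideanSpace ℝ (Fin m)) : ℤ :=
  if LocalConfused Cl ν ρ x y then 0 else if SameCluster Cl x y then 1 else -1

/-- The truthful ρ global distance-weak oracle. -/
noncomputable def globalQ {m k : ℕ} (Cl : Fin k → Finset (EuclideanSpace ℝ (Fin m))) (ρ : ℝ)
    (x y : EuclideanSpace ℝ (Fin m)) : ℤ :=
  if GlobalConfused Cl ρ x y then 0 else if SameCluster Cl x y then 1 else -1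

/-- Under the γ-margin property, if x* ∈ C_i satisfies
d(x*, μ_i) < (γ−ν+1)·r(C_i), then for every j ≠ i and every y ∈ C_j,
d(x*, y) > (ν−1)·min(d(x*,μ_i), d(y,μ_j)); in particular the cross-cluster
confusion condition (a) of a (ν,ρ) local distance-weak oracle never holds for (x*, y). -/
theorem stmt1 {m k : ℕ} (X : Finset (EuclideanSpace ℝ (Fin m)))
    (Cl : Fin k → Finset (EuclideanSpace ℝ (Fin m)))
    (hsub : ∀ i, Cl i ⊆ X) (hne : ∀ i, (Cl i).Nonempty)
    (hpart : ∀ x ∈ X, ∃! i, x ∈ Cl i)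
    (γ : ℝ) (hγ : 1 ≤ γ)
    (hmargin : ∀ i, ∀ x ∈ Cl i, ∀ y ∈ X, y ∉ Cl i →
      γ * dist x (ctr (Cl i)) < dist y (ctr (Cl i)))
    (ν : ℝ) (hν : 1 ≤ ν)
    (i : Fin k) (xs : EuclideanSpace ℝ (Fin m)) (hxs : xs ∈ Cl i)
    (hgood : dist xs (ctr (Cl i)) < (γ - ν + 1) * rad (Cl i)) :
    ∀ j, j ≠ i → ∀ y ∈ Cl j,
      (ν - 1) * min (dist xs (ctr (Cl i))) (dist y (ctr (Cl j))) < dist xs y := by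
  intro j hji y hy
  have hyX : y ∈ X := hsub j hy
  have hyni : y ∉ Cl i := by
    intro hyi
    obtain ⟨w, hw, huniq⟩ := hpart y hyX
    exact hji ((huniq j hy).trans (huniq i hyi).symm)
  -- the image set is finite and nonempty
  have hfin : ((fun x => dist x (ctr (Cl i))) '' ((Cl i : Set _))).Finite :=
    ((Cl i).finite_toSet).image _
  have hnes : ((fun x => dist x (ctr (Cl i))) '' ((Cl i : Set _))).Nonempty := by
    obtain ⟨z, hz⟩ := hne i
    exact ⟨_, ⟨z, hz, rfl⟩⟩
  have hbdd : BddAbove ((fun x => dist x (ctr (Cl i))) '' ((Cl i : Set _))) :=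
    hfin.bddAbove
  have hxr : dist xs (ctr (Cl i)) ≤ rad (Cl i) :=
    le_csSup hbdd ⟨xs, hxs, rfl⟩
  -- the radius is attained
  have hmem : rad (Cl i) ∈ ((fun x => dist x (ctr (Cl i))) '' ((Cl i : Set _))) :=
    hnes.csSup_mem hfin
  obtain ⟨z, hz, hzr⟩ := hmem
  have hyr : γ * rad (Cl i) < dist y (ctr (Cl i)) := by
    have := hmargin i z hz y hyX hyni
    rw [← hzr]; simpa using this
  have htri : dist y (ctr (Cl i)) ≤ dist xs y + dist xs (ctr (Cl i)) := by
    have := dist_triangle y xs (ctr (Cl i))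
    rw [dist_comm y xs] at this
    linarith
  have hmin : min (dist xs (ctr (Cl i))) (dist y (ctr (Cl j))) ≤ dist xs (ctr (Cl i)) :=
    min_le_left _ _
  nlinarith [mul_le_mul_of_nonneg_left hmin (by linarith : (0:ℝ) ≤ ν - 1),
    mul_le_mul_of_nonneg_left hxr (by linarith : (0:ℝ) ≤ ν - 1)]
end

section
/- Let C = {C_1,…,C_k} be a clustering of a finite set X ⊆ ℝ^m with centers μ_i and radii r(C_i), satisfying the γ-margin property with γ ≥ 1, and let ν ≥ 1, ρ ∈ (0,1]. If x* ∈ C_i satisfies d(x*, μ_i) < min{2ρ−1, γ−ν+1}·r(C_i), then for every y ∈ X the pair (x*, y) is not confused for the (ν,ρ) local distance-weak oracle; consequently, the truthful (ν,ρ) local distance-weak oracle Q satisfies Q(x*, y) = 1 if and only if y ∈ C_i, and Q(x*, y) = −1 if and only if y ∈ X \ C_i (it never answers 0 on a query involving x*). -/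
open Finset
open scoped Classical

lemma dist_le_rad {m : ℕ} {C : Finset (EuclideanSpace ℝ (Fin m))}
    {x : EuclideanSpace ℝ (Fin m)} (hx : x ∈ C) : dist x (ctr C) ≤ rad C :=
  le_csSup ((C.finite_toSet.image _).bddAbove) ⟨x, hx, rfl⟩

lemma exists_rad {m : ℕ} {C : Finset (EuclideanSpace ℝ (Fin m))} (hC : C.Nonempty) :
    ∃ z ∈ C, dist z (ctr C) = rad C := by
  have hmem : rad C ∈ ((fun x => dist x (ctr C)) '' (C : Set (EuclideanSpace ℝ (Fin m)))) :=
    Set.Nonempty.csSup_mem (by exact ⟨_, ⟨hC.choose, hC.choose_spec, rfl⟩⟩)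
      (C.finite_toSet.image _)
  obtain ⟨z, hz, hzr⟩ := hmem
  exact ⟨z, hz, hzr⟩

/-- Under the γ-margin property, if x* ∈ C_i satisfies
d(x*, μ_i) < min(2ρ−1, γ−ν+1)·r(C_i), then no pair (x*, y) is confused for the
(ν,ρ) local distance-weak oracle, and the truthful oracle satisfies
Q(x*,y) = 1 ↔ y ∈ C_i and Q(x*,y) = −1 ↔ y ∈ X \ C_i. -/
theorem stmt2 {m k : ℕ} (X : Finset (EuclideanSpace ℝ (Fin m)))
    (Cl : Fin k → Finset (EuclideanSpace ℝ (Fin m)))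
    (hsub : ∀ i, Cl i ⊆ X) (hne : ∀ i, (Cl i).Nonempty)
    (hpart : ∀ x ∈ X, ∃! i, x ∈ Cl i)
    (γ : ℝ) (hγ : 1 ≤ γ)
    (hmargin : ∀ i, ∀ x ∈ Cl i, ∀ y ∈ X, y ∉ Cl i →
      γ * dist x (ctr (Cl i)) < dist y (ctr (Cl i)))
    (ν ρ : ℝ) (hν : 1 ≤ ν) (hρ0 : 0 < ρ) (hρ1 : ρ ≤ 1)
    (i : Fin k) (xs : EuclideanSpace ℝ (Fin m)) (hxs : xs ∈ Cl i)
    (hgood : dist xs (ctr (Cl i)) < min (2 * ρ - 1) (γ - ν + 1) * rad (Cl i)) :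
    ∀ y ∈ X, ¬ LocalConfused Cl ν ρ xs y ∧
      (localQ Cl ν ρ xs y = 1 ↔ y ∈ Cl i) ∧
      (localQ Cl ν ρ xs y = -1 ↔ y ∉ Cl i) := by
  intro y hy
  have hdr : dist xs (ctr (Cl i)) ≤ rad (Cl i) := dist_le_rad hxs
  have hr0 : (0:ℝ) ≤ rad (Cl i) := le_trans dist_nonneg hdr
  have hmr : 0 < min (2 * ρ - 1) (γ - ν + 1) * rad (Cl i) :=
    lt_of_le_of_lt dist_nonneg hgood
  have h1 : dist xs (ctr (Cl i)) < (2 * ρ - 1) * rad (Cl i) :=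
    lt_of_lt_of_le hgood (mul_le_mul_of_nonneg_right (min_le_left _ _) hr0)
  have h2 : dist xs (ctr (Cl i)) < (γ - ν + 1) * rad (Cl i) :=
    lt_of_lt_of_le hgood (mul_le_mul_of_nonneg_right (min_le_right _ _) hr0)
  have huniq : ∀ j, xs ∈ Cl j → j = i :=
    fun j hj => (hpart xs (hsub i hxs)).unique hj hxs
  have hNC : ¬ LocalConfused Cl ν ρ xs y := by
    by_cases hyi : y ∈ Cl i
    · have hdy : dist y (ctr (Cl i)) ≤ rad (Cl i) := dist_le_rad hyi
      have hclose : dist xs y < 2 * ρ * rad (Cl i) := by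
        have := dist_triangle xs (ctr (Cl i)) y
        rw [dist_comm (ctr (Cl i)) y] at this
        nlinarith
      rintro (⟨i', j, hij, hx', hy', _⟩ | ⟨i0, hx0, hy0, hlt⟩)
      · have hji : j = i := (hpart y (hsub i hyi)).unique hy' hyi
        exact hij ((huniq i' hx').trans hji.symm)
      · have : i0 = i := huniq i0 hx0
        subst this
        linarith
    · obtain ⟨z, hz, hzr⟩ := exists_rad (hne i)
      have hmarg : γ * rad (Cl i) < dist y (ctr (Cl i)) := by
        have := hmargin i z hz y hy hyi
        rwa [hzr] at this
      have htri : dist y (ctr (Cl i)) ≤ dist y xs + dist xs (ctr (Cl i)) :=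
        dist_triangle y xs (ctr (Cl i))
      have hfar : (ν - 1) * rad (Cl i) < dist xs y := by
        rw [dist_comm xs y]
        nlinarith
      rintro (⟨i', j, _, hx', hy', hlt⟩ | ⟨i0, hx0, hy0, _⟩)
      · have hii : i' = i := huniq i' hx'
        rw [hii] at hlt
        have hminle : min (dist xs (ctr (Cl i))) (dist y (ctr (Cl j))) ≤ rad (Cl i) :=
          le_trans (min_le_left _ _) hdr
        have : (ν - 1) * min (dist xs (ctr (Cl i))) (dist y (ctr (Cl j))) ≤
            (ν - 1) * rad (Cl i) :=
          mul_le_mul_of_nonneg_left hminle (by linarith)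
        linarith
      · have : i0 = i := huniq i0 hx0
        subst this
        exact hyi hy0
  refine ⟨hNC, ?_, ?_⟩ <;> unfold localQ <;> rw [if_neg hNC]
  · constructor
    · intro h
      by_contra hyi
      rw [if_neg (by rintro ⟨i0, hx0, hy0⟩; exact hyi ((huniq i0 hx0) ▸ hy0))] at h
      norm_num at h
    · intro hyi
      rw [if_pos ⟨i, hxs, hyi⟩]
  · constructor
    · intro h hyi
      rw [if_pos ⟨i, hxs, hyi⟩] at h
      norm_num at h
    · intro hyi
      rw [if_neg (by rintro ⟨i0, hx0, hy0⟩; exact hyi ((huniq i0 hx0) ▸ hy0))]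
end

section
/- Let C = {C_1,…,C_k} be a clustering of a finite set X ⊆ ℝ^m with centers μ_i and radii r(C_i), satisfying the γ-margin property, and let ε ≥ 0 with γ ≥ 1 + 2ε. If a point μ' ∈ ℝ^m satisfies d(μ', μ_i) ≤ ε·r(C_i), then for every x ∈ C_i and every y ∈ X \ C_i one has d(x, μ') < d(y, μ'). -/
open Finset
open scoped Classical

/-- Under the γ-margin property with γ ≥ 1 + 2ε, if μ' satisfies
d(μ', μ_i) ≤ ε·r(C_i), then every x ∈ C_i is strictly closer to μ' than
every y ∈ X \ C_i. -/
theorem stmt4 {m k : ℕ} (X : Finset (EuclideanSpace ℝ (Fin m)))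
    (Cl : Fin k → Finset (EuclideanSpace ℝ (Fin m)))
    (hsub : ∀ i, Cl i ⊆ X) (hne : ∀ i, (Cl i).Nonempty)
    (hpart : ∀ x ∈ X, ∃! i, x ∈ Cl i)
    (γ : ℝ) (hγ : 1 ≤ γ)
    (hmargin : ∀ i, ∀ x ∈ Cl i, ∀ y ∈ X, y ∉ Cl i →
      γ * dist x (ctr (Cl i)) < dist y (ctr (Cl i)))
    (ε : ℝ) (hε : 0 ≤ ε) (hγε : 1 + 2 * ε ≤ γ)
    (i : Fin k) (μ' : EuclideanSpace ℝ (Fin m))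
    (hμ' : dist μ' (ctr (Cl i)) ≤ ε * rad (Cl i)) :
    ∀ x ∈ Cl i, ∀ y ∈ X, y ∉ Cl i → dist x μ' < dist y μ' := by
  intro x hx y hy hyn
  set μ := ctr (Cl i) with hμ
  have hfin : ((fun z => dist z μ) '' ((Cl i) : Set (EuclideanSpace ℝ (Fin m)))).Finite :=
    (Set.Finite.image _ (Cl i).finite_toSet)
  have hnes : ((fun z => dist z μ) '' ((Cl i) : Set (EuclideanSpace ℝ (Fin m)))).Nonempty := by
    obtain ⟨z, hz⟩ := hne i
    exact ⟨dist z μ, ⟨z, hz, rfl⟩⟩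
  have hmem : rad (Cl i) ∈ ((fun z => dist z μ) '' ((Cl i) : Set (EuclideanSpace ℝ (Fin m)))) :=
    hnes.csSup_mem hfin
  obtain ⟨x', hx', hx'r⟩ := hmem
  have hxr : dist x μ ≤ rad (Cl i) :=
    le_csSup hfin.bddAbove ⟨x, hx, rfl⟩
  have hr0 : 0 ≤ rad (Cl i) := le_trans dist_nonneg hxr
  have h1 : γ * dist x' μ < dist y μ := hmargin i x' hx' y hy hyn
  rw [show dist x' μ = rad (Cl i) from hx'r] at h1
  have hγr : (1 + 2 * ε) * rad (Cl i) ≤ γ * rad (Cl i) :=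
    mul_le_mul_of_nonneg_right hγε hr0
  have t1 : dist x μ' ≤ dist x μ + dist μ' μ := by
    rw [dist_comm μ' μ]; exact dist_triangle x μ μ'
  have t2 : dist y μ ≤ dist y μ' + dist μ' μ := by rw [dist_comm μ' μ]; exact dist_triangle_right y μ μ'
  nlinarith [dist_nonneg (x := μ') (y := μ)]
end

section
/- Let C = {C_1,…,C_k} be a clustering of a finite set X ⊆ ℝ^m with centers μ_i and radii r(C_i), satisfying the γ-margin property, and let ε ≥ 0 with γ ≥ 1 + 2ε. Let μ' ∈ ℝ^m satisfy d(μ', μ_i) ≤ ε·r(C_i), and let S be any set with C_i ⊆ S ⊆ X. Then {x ∈ S : d(x, μ') ≤ (1+ε)·r(C_i)} = C_i. -/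
open Finset
open scoped Classical

/-- Under the γ-margin property with γ ≥ 1 + 2ε, if μ' satisfies
d(μ', μ_i) ≤ ε·r(C_i) and C_i ⊆ S ⊆ X, then
{x ∈ S : d(x, μ') ≤ (1+ε)·r(C_i)} = C_i. -/
theorem stmt5 {m k : ℕ} (X : Finset (EuclideanSpace ℝ (Fin m)))
    (Cl : Fin k → Finset (EuclideanSpace ℝ (Fin m)))
    (hsub : ∀ i, Cl i ⊆ X) (hne : ∀ i, (Cl i).Nonempty)
    (hpart : ∀ x ∈ X, ∃! i, x ∈ Cl i)
    (γ : ℝ) (hγ : 1 ≤ γ)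
    (hmargin : ∀ i, ∀ x ∈ Cl i, ∀ y ∈ X, y ∉ Cl i →
      γ * dist x (ctr (Cl i)) < dist y (ctr (Cl i)))
    (ε : ℝ) (hε : 0 ≤ ε) (hγε : 1 + 2 * ε ≤ γ)
    (i : Fin k) (μ' : EuclideanSpace ℝ (Fin m))
    (hμ' : dist μ' (ctr (Cl i)) ≤ ε * rad (Cl i))
    (S : Finset (EuclideanSpace ℝ (Fin m))) (hCS : Cl i ⊆ S) (hSX : S ⊆ X) :
    S.filter (fun x => dist x μ' ≤ (1 + ε) * rad (Cl i)) = Cl i := by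
  have hfin : ((fun x => dist x (ctr (Cl i))) '' ((Cl i) : Set _)).Finite :=
    ((Cl i).finite_toSet).image _
  have hnei : ((fun x => dist x (ctr (Cl i))) '' ((Cl i) : Set _)).Nonempty :=
    (Set.Nonempty.image _ (hne i))
  have hradmem : rad (Cl i) ∈ (fun x => dist x (ctr (Cl i))) '' ((Cl i) : Set _) :=
    Set.Nonempty.csSup_mem hnei hfin
  obtain ⟨x0, hx0, hx0d⟩ := hradmem
  have hrad0 : 0 ≤ rad (Cl i) := hx0d ▸ dist_nonneg
  have hle : ∀ x ∈ Cl i, dist x (ctr (Cl i)) ≤ rad (Cl i) := fun x hx =>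
    le_csSup hfin.bddAbove ⟨x, hx, rfl⟩
  ext x
  simp only [Finset.mem_filter]
  constructor
  · rintro ⟨hxS, hxd⟩
    by_contra hxi
    have h1 := hmargin i x0 hx0 x (hSX hxS) hxi
    have h2 : dist x (ctr (Cl i)) ≤ dist x μ' + dist μ' (ctr (Cl i)) := dist_triangle _ _ _
    have h3 : dist x (ctr (Cl i)) ≤ (1 + ε) * rad (Cl i) + ε * rad (Cl i) := by
      linarith
    have h4 : (1 + 2 * ε) * rad (Cl i) ≤ γ * rad (Cl i) :=
      mul_le_mul_of_nonneg_right hγε hrad0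
    simp only [] at hx0d
    have hx0d2 : dist x0 (ctr (Cl i)) = rad (Cl i) := hx0d
    rw [hx0d2] at h1
    nlinarith
  · intro hx
    refine ⟨hCS hx, ?_⟩
    have := hle x hx
    have := dist_triangle x (ctr (Cl i)) μ'
    rw [dist_comm (ctr (Cl i)) μ'] at this
    nlinarith
end

section
/- Let C = {C_1,…,C_k} be a clustering of a finite set X ⊆ ℝ^m with centers μ_i and radii r(C_i), satisfying the γ-margin property, and let ε ≥ 0 with γ ≥ 1 + 2ε. Let μ' ∈ ℝ^m satisfy d(μ', μ_i) ≤ ε·r(C_i), and let S be a set with C_i ⊆ S ⊆ X and S \ C_i nonempty. Define r' = min_{y ∈ S \ C_i} d(y, μ'). Then {x ∈ S : d(x, μ') < r'} = C_i. (This is the correctness of the threshold radius found by binary search over the points of S sorted by distance to the empirical center μ'.) -/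
open Finset
open scoped Classical

/-- Under the γ-margin property with γ ≥ 1 + 2ε, if μ' satisfies
d(μ', μ_i) ≤ ε·r(C_i), C_i ⊆ S ⊆ X and S \ C_i is nonempty, then with
r' = min_{y ∈ S \ C_i} d(y, μ') one has {x ∈ S : d(x, μ') < r'} = C_i. -/
theorem stmt6 {m k : ℕ} (X : Finset (EuclideanSpace ℝ (Fin m)))
    (Cl : Fin k → Finset (EuclideanSpace ℝ (Fin m)))
    (hsub : ∀ i, Cl i ⊆ X) (hne : ∀ i, (Cl i).Nonempty)
    (hpart : ∀ x ∈ X, ∃! i, x ∈ Cl i)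
    (γ : ℝ) (hγ : 1 ≤ γ)
    (hmargin : ∀ i, ∀ x ∈ Cl i, ∀ y ∈ X, y ∉ Cl i →
      γ * dist x (ctr (Cl i)) < dist y (ctr (Cl i)))
    (ε : ℝ) (hε : 0 ≤ ε) (hγε : 1 + 2 * ε ≤ γ)
    (i : Fin k) (μ' : EuclideanSpace ℝ (Fin m))
    (hμ' : dist μ' (ctr (Cl i)) ≤ ε * rad (Cl i))
    (S : Finset (EuclideanSpace ℝ (Fin m))) (hCS : Cl i ⊆ S) (hSX : S ⊆ X)
    (hdiff : (S \ Cl i).Nonempty) :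
    S.filter (fun x => dist x μ' < (S \ Cl i).inf' hdiff (fun y => dist y μ')) = Cl i := by
  set μ := ctr (Cl i) with hμdef
  set r := rad (Cl i) with hrdef
  -- rad is attained and is an upper bound
  have hfin : ((fun x => dist x μ) '' ((Cl i) : Set _)).Finite :=
    ((Cl i).finite_toSet).image _
  have hne' : ((fun x => dist x μ) '' ((Cl i) : Set _)).Nonempty :=
    (hne i).to_set.image _
  have hmem : r ∈ (fun x => dist x μ) '' ((Cl i) : Set _) :=
    hne'.csSup_mem hfin
  obtain ⟨xs, hxs, hxseq⟩ := hmem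
  have hle : ∀ x ∈ Cl i, dist x μ ≤ r := fun x hx =>
    le_csSup hfin.bddAbove ⟨x, hx, rfl⟩
  have hr0 : 0 ≤ r := hxseq ▸ dist_nonneg
  -- outer points are far from μ'
  have houter : ∀ y ∈ S \ Cl i, (1 + ε) * r < dist y μ' := by
    intro y hy
    rw [Finset.mem_sdiff] at hy
    have hym : γ * dist xs μ < dist y μ :=
      hmargin i xs hxs y (hSX hy.1) hy.2
    rw [show dist xs μ = r from hxseq] at hym
    have h1 : dist y μ ≤ dist y μ' + dist μ' μ := dist_triangle y μ' μ
    have h2 : γ * r ≤ dist y μ' + ε * r := by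
      linarith
    nlinarith
  -- inner points are close to μ'
  have hinner : ∀ x ∈ Cl i, dist x μ' ≤ (1 + ε) * r := by
    intro x hx
    have h1 : dist x μ' ≤ dist x μ + dist μ μ' := dist_triangle x μ μ'
    have h2 : dist μ μ' = dist μ' μ := dist_comm μ μ'
    have := hle x hx
    linarith
  have hinf : (1 + ε) * r < (S \ Cl i).inf' hdiff (fun y => dist y μ') := by
    rw [Finset.lt_inf'_iff]
    exact houter
  ext a
  simp only [Finset.mem_filter]
  constructor
  · rintro ⟨haS, halt⟩
    by_contra h
    have : a ∈ S \ Cl i := Finset.mem_sdiff.mpr ⟨haS, h⟩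
    exact absurd halt (not_lt.mpr (Finset.inf'_le _ this))
  · intro ha
    exact ⟨hCS ha, lt_of_le_of_lt (hinner a ha) hinf⟩
end

section
/- Let C = {C_1,…,C_k} be a clustering of a finite set X ⊆ ℝ^m with centers μ_j and radii r(C_j), satisfying the γ-margin property with γ ≥ 1, and let ν ≥ 1, ρ ∈ (0,1]. Suppose for every j ∈ [k] there is a representative z_j ∈ C_j with d(z_j, μ_j) < min{2ρ−1, γ−ν+1}·r(C_j). Then for every x ∈ X and every j ∈ [k], the pair (z_j, x) is not confused for the (ν,ρ) local distance-weak oracle; consequently, for the truthful (ν,ρ) local distance-weak oracle Q and every x ∈ X there is exactly one index j with Q(z_j, x) = 1, and x ∈ C_j for that index (i.e., the weak pairwise cluster-assignment query using the representatives z_1,…,z_k returns the correct cluster index for every point). -/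
open Finset
open scoped Classical

lemma rad_le {m : ℕ} {C : Finset (EuclideanSpace ℝ (Fin m))} (hC : C.Nonempty) {b : ℝ}
    (h : ∀ w ∈ C, dist w (ctr C) ≤ b) : rad C ≤ b := by
  apply csSup_le
  · exact Set.Nonempty.image _ (by exact_mod_cast hC.to_set)
  · rintro r ⟨w, hw, rfl⟩
    exact h w (by simpa using hw)

/-- Under the γ-margin property, if every cluster C_j has a representative
z_j with d(z_j, μ_j) < min(2ρ−1, γ−ν+1)·r(C_j), then no pair (z_j, x) is confused for the
(ν,ρ) local distance-weak oracle, and for every x ∈ X exactly one index j has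
Q(z_j, x) = 1, with x ∈ C_j for that index. -/
theorem stmt11 {m k : ℕ} (X : Finset (EuclideanSpace ℝ (Fin m)))
    (Cl : Fin k → Finset (EuclideanSpace ℝ (Fin m)))
    (hsub : ∀ i, Cl i ⊆ X) (hne : ∀ i, (Cl i).Nonempty)
    (hpart : ∀ x ∈ X, ∃! i, x ∈ Cl i)
    (γ : ℝ) (hγ : 1 ≤ γ)
    (hmargin : ∀ i, ∀ x ∈ Cl i, ∀ y ∈ X, y ∉ Cl i →
      γ * dist x (ctr (Cl i)) < dist y (ctr (Cl i)))
    (ν ρ : ℝ) (hν : 1 ≤ ν) (hρ0 : 0 < ρ) (hρ1 : ρ ≤ 1)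
    (z : Fin k → EuclideanSpace ℝ (Fin m))
    (hz : ∀ j, z j ∈ Cl j)
    (hzgood : ∀ j, dist (z j) (ctr (Cl j)) < min (2 * ρ - 1) (γ - ν + 1) * rad (Cl j)) :
    ∀ x ∈ X,
      (∀ j, ¬ LocalConfused Cl ν ρ (z j) x) ∧
      (∃! j, localQ Cl ν ρ (z j) x = 1) ∧
      (∀ j, localQ Cl ν ρ (z j) x = 1 → x ∈ Cl j) := by
  intro x hx
  obtain ⟨i, hxi, hxuniq⟩ := hpart x hx
  -- basic facts for each j
  have hzX : ∀ j, z j ∈ X := fun j => hsub j (hz j)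
  have hzuniq : ∀ j a, z j ∈ Cl a → a = j := by
    intro j a ha
    obtain ⟨i0, hi0, hu⟩ := hpart (z j) (hzX j)
    rw [hu a ha, hu j (hz j)]
  have key : ∀ j, ¬ LocalConfused Cl ν ρ (z j) x := by
    intro j hconf
    set μ := ctr (Cl j) with hμ
    set R := rad (Cl j) with hR
    set d := dist (z j) μ with hd
    have hdR : d ≤ R := dist_le_rad (hz j)
    have hd0 : (0:ℝ) ≤ d := dist_nonneg
    have hgood := hzgood j
    rw [← hμ, ← hR, ← hd] at hgood
    have hR0 : 0 < R := by nlinarith [min_le_left (2*ρ-1) (γ-ν+1)]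
    have hmin1 : min (2*ρ-1) (γ-ν+1) ≤ 2*ρ-1 := min_le_left _ _
    have hmin2 : min (2*ρ-1) (γ-ν+1) ≤ γ-ν+1 := min_le_right _ _
    have hd1 : d < (2*ρ-1) * R := lt_of_lt_of_le hgood (by nlinarith)
    have hd2 : d < (γ-ν+1) * R := lt_of_lt_of_le hgood (by nlinarith)
    rcases hconf with ⟨a, b, hab, hza, hxb, hlt⟩ | ⟨a, hza, hxa, hlt⟩
    · have haj : a = j := hzuniq j a hza
      subst haj
      have hxnot : x ∉ Cl a := by
        intro hxa
        exact hab ((hxuniq a hxa).trans (hxuniq b hxb).symm)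
      have hmar : ∀ w ∈ Cl a, dist w μ ≤ dist x μ / γ := by
        intro w hw
        have := hmargin a w hw x hx hxnot
        rw [← hμ] at this
        rw [le_div_iff₀ (by linarith : (0:ℝ) < γ)]
        nlinarith
      have hRle : R ≤ dist x μ / γ := rad_le (hne a) hmar
      have hγR : γ * R ≤ dist x μ := by
        rw [le_div_iff₀ (by linarith : (0:ℝ) < γ)] at hRle
        nlinarith
      have htri : dist x μ ≤ dist (z a) x + d := by
        have := dist_triangle x (z a) μ
        rw [dist_comm x (z a)] at this
        linarith
      have hlt2 : dist (z a) x < (ν-1) * d := by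
        calc dist (z a) x < (ν-1) * min (dist (z a) μ) (dist x (ctr (Cl b))) := hlt
        _ ≤ (ν-1) * d := by
            apply mul_le_mul_of_nonneg_left (min_le_left _ _) (by linarith)
      nlinarith
    · have haj : a = j := hzuniq j a hza
      subst haj
      have hxμ : dist x μ ≤ R := dist_le_rad hxa
      have htri : dist (z a) x ≤ d + dist x μ := by
        have := dist_triangle (z a) μ x
        rw [dist_comm μ x] at this
        linarith
      nlinarith
  refine ⟨key, ?_, ?_⟩
  · refine ⟨i, ?_, ?_⟩
    · unfold localQ
      simp only [if_neg (key i)]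
      exact if_pos ⟨i, hz i, hxi⟩
    · intro j hj
      unfold localQ at hj
      simp only [if_neg (key j)] at hj
      by_cases hsc : SameCluster Cl (z j) x
      · obtain ⟨a, hza, hxa⟩ := hsc
        rw [← hzuniq j a hza, hxuniq a hxa]
      · simp only [if_neg hsc] at hj; exact absurd hj (by norm_num)
  · intro j hj
    unfold localQ at hj
    simp only [if_neg (key j)] at hj
    by_cases hsc : SameCluster Cl (z j) x
    · obtain ⟨a, hza, hxa⟩ := hsc
      rwa [hzuniq j a hza] at hxa
    · simp only [if_neg hsc] at hj; exact absurd hj (by norm_num)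
end
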